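/- Let (C, E, s) be an extriangulated category and A →x B →y C --δ--> an E-triangle. Then for any object X, the sequence Hom(X,A) → Hom(X,B) → Hom(X,C) → E(X,A) → E(X,B) → E(X,C) is exact, where the connecting map sends f: X → C to f*δ. -/

import Mathlib

open CategoryTheory Limits

universe w v u

/-- An extriangulated category structure on an additive category `𝒞`, in the sense of
Nakaoka–Palu: a biadditive `Ab`-valued functor `E` together with an additive realization,
encoded via the predicate `IsTriangle x y δ` meaning that `A ⟶x B ⟶y X` realizes
`δ ∈ E(X,A)`, satisfying (ET1)–(ET4) and their duals. -/
structure ExtriangulatedStructure (𝒞 : Type u) [Category.{v} 𝒞] [Preadditive 𝒞]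
    [HasBinaryBiproducts 𝒞] where
  E : 𝒞 → 𝒞 → AddCommGrpCat.{w}
  pull : ∀ {X' X A : 𝒞}, (X' ⟶ X) → E X A → E X' A
  push : ∀ {X A A' : 𝒞}, (A ⟶ A') → E X A → E X A'
  pull_id : ∀ {X A : 𝒞} (δ : E X A), pull (𝟙 X) δ = δ
  push_id : ∀ {X A : 𝒞} (δ : E X A), push (𝟙 A) δ = δ
  pull_comp : ∀ {X'' X' X A : 𝒞} (c' : X'' ⟶ X') (c : X' ⟶ X) (δ : E X A),
      pull (c' ≫ c) δ = pull c' (pull c δ)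
  push_comp : ∀ {X A A' A'' : 𝒞} (a : A ⟶ A') (a' : A' ⟶ A'') (δ : E X A),
      push (a ≫ a') δ = push a' (push a δ)
  pull_push : ∀ {X' X A A' : 𝒞} (c : X' ⟶ X) (a : A ⟶ A') (δ : E X A),
      pull c (push a δ) = push a (pull c δ)
  pull_add : ∀ {X' X A : 𝒞} (c : X' ⟶ X) (δ δ' : E X A),
      pull c (δ + δ') = pull c δ + pull c δ'
  push_add : ∀ {X A A' : 𝒞} (a : A ⟶ A') (δ δ' : E X A),
      push a (δ + δ') = push a δ + push a δ'
  add_pull : ∀ {X' X A : 𝒞} (c c' : X' ⟶ X) (δ : E X A),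
      pull (c + c') δ = pull c δ + pull c' δ
  add_push : ∀ {X A A' : 𝒞} (a a' : A ⟶ A') (δ : E X A),
      push (a + a') δ = push a δ + push a' δ
  IsTriangle : ∀ {A B X : 𝒞}, (A ⟶ B) → (B ⟶ X) → E X A → Prop
  realize_exists : ∀ {X A : 𝒞} (δ : E X A),
      ∃ (B : 𝒞) (x : A ⟶ B) (y : B ⟶ X), IsTriangle x y δ
  realize_zero : ∀ (A X : 𝒞),
      IsTriangle (biprod.inl : A ⟶ A ⊞ X) (biprod.snd : A ⊞ X ⟶ X) (0 : E X A)
  realize_sum : ∀ {A B X A' B' X' : 𝒞} (x : A ⟶ B) (y : B ⟶ X) (δ : E X A)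
      (x' : A' ⟶ B') (y' : B' ⟶ X') (δ' : E X' A'),
      IsTriangle x y δ → IsTriangle x' y' δ' →
      IsTriangle (biprod.map x x') (biprod.map y y')
        (push biprod.inl (pull biprod.fst δ) + push biprod.inr (pull biprod.snd δ'))
  realize_iso : ∀ {A B B' X : 𝒞} (x : A ⟶ B) (y : B ⟶ X) (δ : E X A) (b : B ≅ B'),
      IsTriangle x y δ → IsTriangle (x ≫ b.hom) (b.inv ≫ y) δ
  realize_mor : ∀ {A B X A' B' X' : 𝒞} {x : A ⟶ B} {y : B ⟶ X} {δ : E X A}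
      {x' : A' ⟶ B'} {y' : B' ⟶ X'} {δ' : E X' A'} (a : A ⟶ A') (c : X ⟶ X'),
      IsTriangle x y δ → IsTriangle x' y' δ' → push a δ = pull c δ' →
      ∃ b : B ⟶ B', x ≫ b = a ≫ x' ∧ y ≫ c = b ≫ y'
  ET3 : ∀ {A B X A' B' X' : 𝒞} {x : A ⟶ B} {y : B ⟶ X} {δ : E X A}
      {x' : A' ⟶ B'} {y' : B' ⟶ X'} {δ' : E X' A'} (a : A ⟶ A') (b : B ⟶ B'),
      IsTriangle x y δ → IsTriangle x' y' δ' → x ≫ b = a ≫ x' →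
      ∃ c : X ⟶ X', push a δ = pull c δ' ∧ y ≫ c = b ≫ y'
  ET3op : ∀ {A B X A' B' X' : 𝒞} {x : A ⟶ B} {y : B ⟶ X} {δ : E X A}
      {x' : A' ⟶ B'} {y' : B' ⟶ X'} {δ' : E X' A'} (b : B ⟶ B') (c : X ⟶ X'),
      IsTriangle x y δ → IsTriangle x' y' δ' → y ≫ c = b ≫ y' →
      ∃ a : A ⟶ A', push a δ = pull c δ' ∧ x ≫ b = a ≫ x'
  ET4 : ∀ {A B D Cv F : 𝒞} (f : A ⟶ B) (f' : B ⟶ D) (δ : E D A)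
      (g : B ⟶ Cv) (g' : Cv ⟶ F) (δ' : E F B),
      IsTriangle f f' δ → IsTriangle g g' δ' →
      ∃ (E₀ : 𝒞) (h : A ⟶ Cv) (h' : Cv ⟶ E₀) (d : D ⟶ E₀) (e : E₀ ⟶ F) (δ'' : E E₀ A),
        IsTriangle h h' δ'' ∧ IsTriangle d e (push f' δ') ∧
        h = f ≫ g ∧ f' ≫ d = g ≫ h' ∧ g' = h' ≫ e ∧
        pull d δ'' = δ ∧ push f δ'' = pull e δ'
  ET4op : ∀ {D B A F Cv : 𝒞} (i : D ⟶ B) (p : B ⟶ A) (δ : E A D)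
      (j : F ⟶ Cv) (q : Cv ⟶ B) (δ' : E B F),
      IsTriangle i p δ → IsTriangle j q δ' →
      ∃ (E₀ : 𝒞) (i' : E₀ ⟶ Cv) (p' : Cv ⟶ A) (m : F ⟶ E₀) (n : E₀ ⟶ D) (δ'' : E A E₀),
        IsTriangle i' p' δ'' ∧ IsTriangle m n (pull i δ') ∧
        p' = q ≫ p ∧ i' ≫ q = n ≫ i ∧ j = m ≫ i' ∧
        push n δ'' = δ ∧ pull p δ'' = push m δ'

namespace ExtriangulatedStructure

variable {𝒞 : Type u} [Category.{v} 𝒞] [Preadditive 𝒞] [HasBinaryBiproducts 𝒞]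
variable (S : ExtriangulatedStructure.{w} 𝒞)

/-- A morphism is an inflation if it occurs as the first map of some `E`-triangle. -/
def IsInflation {A B : 𝒞} (f : A ⟶ B) : Prop :=
  ∃ (X : 𝒞) (g : B ⟶ X) (δ : S.E X A), S.IsTriangle f g δ

/-- A morphism is a deflation if it occurs as the second map of some `E`-triangle. -/
def IsDeflation {B X : 𝒞} (g : B ⟶ X) : Prop :=
  ∃ (A : 𝒞) (f : A ⟶ B) (δ : S.E X A), S.IsTriangle f g δ

/-- Condition (WIC). -/
def WIC : Prop :=
  (∀ {A B X : 𝒞} (f : A ⟶ B) (g : B ⟶ X), S.IsInflation (f ≫ g) → S.IsInflation f) ∧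
  (∀ {A B X : 𝒞} (f : A ⟶ B) (g : B ⟶ X), S.IsDeflation (f ≫ g) → S.IsDeflation g)

/-- `(a, b, c)` is a morphism of `E`-triangles. -/
def IsTriangleMor {A B X A' B' X' : 𝒞} (x : A ⟶ B) (y : B ⟶ X) (δ : S.E X A)
    (x' : A' ⟶ B') (y' : B' ⟶ X') (δ' : S.E X' A')
    (a : A ⟶ A') (b : B ⟶ B') (c : X ⟶ X') : Prop :=
  x ≫ b = a ≫ x' ∧ y ≫ c = b ≫ y' ∧ S.push a δ = S.pull c δ'

/-- A cotorsion pair `(𝒬, ℛ)`: `E(𝒬, ℛ) = 0` and every object admits the two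
approximation `E`-triangles. -/
def CotorsionPair (𝒬 ℛ : Set 𝒞) : Prop :=
  (∀ (Q R : 𝒞), Q ∈ 𝒬 → R ∈ ℛ → ∀ δ : S.E Q R, δ = 0) ∧
  (∀ X : 𝒞, ∃ (R Q : 𝒞) (f : R ⟶ Q) (g : Q ⟶ X) (δ : S.E X R),
      S.IsTriangle f g δ ∧ Q ∈ 𝒬 ∧ R ∈ ℛ) ∧
  (∀ X : 𝒞, ∃ (R Q : 𝒞) (f : X ⟶ R) (g : R ⟶ Q) (δ : S.E Q X),
      S.IsTriangle f g δ ∧ Q ∈ 𝒬 ∧ R ∈ ℛ)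

/-- A cotorsion pair is hereditary if `𝒬` is closed under cocones of deflations and
`ℛ` is closed under cones of inflations. -/
def Hereditary (𝒬 ℛ : Set 𝒞) : Prop :=
  (∀ {A B X : 𝒞} (f : A ⟶ B) (g : B ⟶ X) (δ : S.E X A),
      S.IsTriangle f g δ → B ∈ 𝒬 → X ∈ 𝒬 → A ∈ 𝒬) ∧
  (∀ {A B X : 𝒞} (f : A ⟶ B) (g : B ⟶ X) (δ : S.E X A),
      S.IsTriangle f g δ → A ∈ ℛ → B ∈ ℛ → X ∈ ℛ)

/-- A class of objects is thick: closed under direct summands and satisfying the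
2-out-of-3 property on `E`-triangles. -/
def Thick (𝒲 : Set 𝒞) : Prop :=
  (∀ {X Y : 𝒞}, Y ∈ 𝒲 → (∃ (i : X ⟶ Y) (p : Y ⟶ X), i ≫ p = 𝟙 X) → X ∈ 𝒲) ∧
  (∀ {A B X : 𝒞} (f : A ⟶ B) (g : B ⟶ X) (δ : S.E X A), S.IsTriangle f g δ →
    (A ∈ 𝒲 → B ∈ 𝒲 → X ∈ 𝒲) ∧ (A ∈ 𝒲 → X ∈ 𝒲 → B ∈ 𝒲) ∧ (B ∈ 𝒲 → X ∈ 𝒲 → A ∈ 𝒲))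

/-- `(𝒬, 𝒲, ℛ)` is a Hovey triple. -/
def HoveyTriple (𝒬 𝒲 ℛ : Set 𝒞) : Prop :=
  S.Thick 𝒲 ∧ S.CotorsionPair 𝒬 (𝒲 ∩ ℛ) ∧ S.CotorsionPair (𝒬 ∩ 𝒲) ℛ

end ExtriangulatedStructure

namespace ExtriangulatedStructure

variable {𝒞 : Type u} [Category.{v} 𝒞] [Preadditive 𝒞] [HasBinaryBiproducts 𝒞]
variable (S : ExtriangulatedStructure.{w} 𝒞)

lemma pull_zero' {X' X A : 𝒞} (c : X' ⟶ X) : S.pull c (0 : S.E X A) = 0 := by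
  have h := S.pull_add c (0 : S.E X A) 0
  rw [add_zero] at h
  exact (left_eq_add.mp h)

lemma push_zero' {X A A' : 𝒞} (a : A ⟶ A') : S.push a (0 : S.E X A) = 0 := by
  have h := S.push_add a (0 : S.E X A) 0
  rw [add_zero] at h
  exact (left_eq_add.mp h)

lemma zero_pull' {X' X A : 𝒞} (δ : S.E X A) : S.pull (0 : X' ⟶ X) δ = 0 := by
  have h := S.add_pull (0 : X' ⟶ X) 0 δ
  rw [add_zero] at h
  exact (left_eq_add.mp h)

lemma zero_push' {X A A' : 𝒞} (δ : S.E X A) : S.push (0 : A ⟶ A') δ = 0 := by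
  have h := S.add_push (0 : A ⟶ A') 0 δ
  rw [add_zero] at h
  exact (left_eq_add.mp h)

/-- For a triangle `(x, y, δ)` one has `x ≫ y = 0` and `x_* δ = 0`. -/
lemma tri_comp_push {A B C0 : 𝒞} {x : A ⟶ B} {y : B ⟶ C0} {δ : S.E C0 A}
    (hT : S.IsTriangle x y δ) : x ≫ y = 0 ∧ S.push x δ = 0 := by
  obtain ⟨a, ha, hb⟩ := S.ET3op (biprod.lift (𝟙 B) y) (𝟙 C0) hT (S.realize_zero B C0)
    (by simp)
  -- hb : x ≫ biprod.lift (𝟙 B) y = a ≫ biprod.inl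
  have hax : a = x := by
    have h := congrArg (· ≫ (biprod.fst : B ⊞ C0 ⟶ B)) hb
    simpa using h.symm
  constructor
  · have h := congrArg (· ≫ (biprod.snd : B ⊞ C0 ⟶ C0)) hb
    simpa using h
  · rw [← hax, ha, S.pull_id]

/-- For a triangle `(x, y, δ)` one has `y^* δ = 0`. -/
lemma tri_pull {A B C0 : 𝒞} {x : A ⟶ B} {y : B ⟶ C0} {δ : S.E C0 A}
    (hT : S.IsTriangle x y δ) : S.pull y δ = 0 := by
  obtain ⟨c, ha, hb⟩ := S.ET3 (𝟙 A) (biprod.desc x (𝟙 B)) (S.realize_zero A B) hT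
    (by simp)
  -- hb : biprod.snd ≫ c = biprod.desc x (𝟙 B) ≫ y
  have hcy : c = y := by
    have h := congrArg ((biprod.inr : B ⟶ A ⊞ B) ≫ ·) hb
    simpa using h
  rw [← hcy, ← ha, S.push_id]

end ExtriangulatedStructure

open CategoryTheory Limits in
/-- the covariant long exact sequence associated to an E-triangle. -/
theorem stmt13 {𝒞 : Type u} [Category.{v} 𝒞] [Preadditive 𝒞] [HasBinaryBiproducts 𝒞]
    (S : ExtriangulatedStructure.{w} 𝒞)
    {A B C0 : 𝒞} (x : A ⟶ B) (y : B ⟶ C0) (δ : S.E C0 A)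
    (hT : S.IsTriangle x y δ) (T : 𝒞) :
    (∀ φ : T ⟶ B, φ ≫ y = 0 ↔ ∃ ψ : T ⟶ A, ψ ≫ x = φ) ∧
    (∀ φ : T ⟶ C0, S.pull φ δ = 0 ↔ ∃ ψ : T ⟶ B, ψ ≫ y = φ) ∧
    (∀ ε : S.E T A, S.push x ε = 0 ↔ ∃ φ : T ⟶ C0, S.pull φ δ = ε) ∧
    (∀ ε : S.E T B, S.push y ε = 0 ↔ ∃ ε' : S.E T A, S.push x ε' = ε) := by
  obtain ⟨hxy, hpushx⟩ := S.tri_comp_push hT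
  have hpully : S.pull y δ = 0 := S.tri_pull hT
  refine ⟨?_, ?_, ?_, ?_⟩
  · intro φ
    constructor
    · intro hφ
      obtain ⟨a, _, hb⟩ := S.ET3op (biprod.desc φ 0) (0 : C0 ⟶ C0)
        (S.realize_zero T C0) hT (by apply biprod.hom_ext' <;> simp [hφ])
      -- hb : biprod.inl ≫ biprod.desc φ 0 = a ≫ x
      exact ⟨a, by simpa using hb.symm⟩
    · rintro ⟨ψ, rfl⟩
      rw [Category.assoc, hxy, Limits.comp_zero]
  · intro φ
    constructor
    · intro hφ
      obtain ⟨b, hb1, hb2⟩ := S.realize_mor (𝟙 A) φ (S.realize_zero A T) hT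
        (by rw [S.push_id, hφ])
      -- hb2 : biprod.snd ≫ φ = b ≫ y
      refine ⟨biprod.inr ≫ b, ?_⟩
      have h := congrArg ((biprod.inr : T ⟶ A ⊞ T) ≫ ·) hb2
      simpa using h.symm
    · rintro ⟨ψ, rfl⟩
      rw [S.pull_comp, hpully, S.pull_zero']
  · intro ε
    constructor
    · intro hε
      obtain ⟨D, f, g, hfg⟩ := S.realize_exists ε
      obtain ⟨b, hb1, hb2⟩ := S.realize_mor x (𝟙 T) hfg (S.realize_zero B T)
        (by rw [S.pull_id, hε])
      -- hb1 : f ≫ b = x ≫ biprod.inl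
      obtain ⟨c, hc1, _⟩ := S.ET3 (𝟙 A) (b ≫ biprod.fst) hfg hT
        (by rw [← Category.assoc, hb1]; simp)
      exact ⟨c, by rw [← hc1, S.push_id]⟩
    · rintro ⟨φ, rfl⟩
      rw [← S.pull_push, hpushx, S.pull_zero']
  · intro ε
    constructor
    · intro hε
      obtain ⟨D, f, g, hfg⟩ := S.realize_exists ε
      obtain ⟨E₀, h, h', d, e, δ'', hT1, hT2, _, _, _, hpull, hpush⟩ :=
        S.ET4 x y δ f g ε hT hfg
      rw [hε] at hT2
      obtain ⟨b₂, hb1, hb2⟩ := S.realize_mor (𝟙 C0) (𝟙 T) (S.realize_zero C0 T) hT2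
        (by rw [S.push_id, S.pull_id])
      -- hb2 : biprod.snd ≫ 𝟙 T = b₂ ≫ e
      refine ⟨S.pull (biprod.inr ≫ b₂) δ'', ?_⟩
      rw [← S.pull_push, hpush, ← S.pull_comp, Category.assoc, ← hb2]
      simp [S.pull_id]
    · rintro ⟨ε', rfl⟩
      rw [← S.push_comp, hxy, S.zero_push']
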